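/- Let T and T' be two simplicial G-trees. Then T is a (possibly non-elementary) collapse of T' if and only if there exists a G-equivariant injection φ : E(T) → E(T') satisfying φ(ē) = φ(e)‾ which preserves alignment, in the sense that if oriented edges e₁, e₂, e₃ of T are aligned in this order, then φ(e₁), φ(e₂), φ(e₃) are aligned in this order in T'. -/

import Mathlib

set_option autoImplicit false
set_option maxHeartbeats 1000000
open scoped Classical

universe u

section Trees

variable (G : Type u) [Group G]

/-- A (minimal, simplicial) `G`-tree: a simplicial tree together with an action of `G` by
simplicial automorphisms, without inversions, admitting no proper invariant subtree. -/
structure GTree : Type (u + 1) where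
  V : Type u
  nonempty : Nonempty V
  graph : SimpleGraph V
  isTree : graph.IsTree
  act : G →* Equiv.Perm V
  adj_act : ∀ (g : G) (u v : V), graph.Adj u v → graph.Adj (act g u) (act g v)
  noInversion : ∀ (g : G) (u v : V), graph.Adj u v → ¬(act g u = v ∧ act g v = u)
  minimal : ∀ S : Set V, S.Nonempty → (∀ (g : G), ∀ v ∈ S, act g v ∈ S) →
      (∀ u ∈ S, ∀ v ∈ S, ∀ p : graph.Walk u v, p.IsPath → ∀ w ∈ p.support, w ∈ S) →
      S = Set.univ

variable {G}

namespace GTree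

variable (T : GTree G)

/-- The stabilizer of a vertex. -/
def stab (v : T.V) : Subgroup G where
  carrier := {g : G | T.act g v = v}
  one_mem' := by simp
  mul_mem' := by
    intro a b ha hb
    simp only [Set.mem_setOf_eq, map_mul, Equiv.Perm.mul_apply] at *
    rw [hb, ha]
  inv_mem' := by
    intro a ha
    simp only [Set.mem_setOf_eq] at *
    have h : T.act a⁻¹ (T.act a v) = v := by
      rw [← Equiv.Perm.mul_apply, ← map_mul, inv_mul_cancel, map_one, Equiv.Perm.one_apply]
    rwa [ha] at h

/-- The (pointwise) stabilizer of an edge `uv`; since the action has no inversions this is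
the full stabilizer of the edge. -/
def edgeStab (u v : T.V) : Subgroup G := T.stab u ⊓ T.stab v

/-- A subgroup of `G` is elliptic if it fixes a vertex. -/
def Elliptic (H : Subgroup G) : Prop := ∃ v : T.V, ∀ h ∈ H, T.act h v = v

/-- An element of `G` is elliptic if it fixes a vertex. -/
def EllipticElt (g : G) : Prop := ∃ v : T.V, T.act g v = v

/-- An element of `G` is hyperbolic if it fixes no vertex. -/
def Hyperbolic (g : G) : Prop := ∀ v : T.V, T.act g v ≠ v

/-- A `G`-tree is reduced if whenever the stabilizer of an edge `uv` equals the stabilizer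
of `u` (i.e. `G_u ≤ G_v`), the two endpoints are in the same orbit. -/
def Reduced : Prop :=
  ∀ u v : T.V, T.graph.Adj u v → T.stab u ≤ T.stab v → ∃ g : G, T.act g u = v

/-- `T` is a single point. -/
protected def Trivial : Prop := ∀ u v : T.V, u = v

/-- `T` is a (simplicial) line. -/
def IsLine : Prop := ∀ v : T.V, ∃ a b : T.V, a ≠ b ∧ {w : T.V | T.graph.Adj v w} = {a, b}

/-- `G` fixes an end of `T`: there is an equivariant choice, for each vertex, of the next
vertex in the direction of the fixed end. -/
def FixesEnd : Prop :=
  ∃ next : T.V → T.V, (∀ v, T.graph.Adj v (next v)) ∧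
    (∀ (g : G) (v : T.V), next (T.act g v) = T.act g (next v)) ∧
    (∀ v, next (next v) ≠ v)

/-- Linear abelian type: `T` is a line on which `G` acts by translations (every element acts
either trivially or freely). -/
def LinearAbelian : Prop :=
  T.IsLine ∧ ∀ g : G, (∀ v : T.V, T.act g v = v) ∨ (∀ v : T.V, T.act g v ≠ v)

/-- Dihedral type: `T` is a line and some element acts as a reflection. -/
def Dihedral : Prop :=
  T.IsLine ∧ ∃ g : G, (∃ v : T.V, T.act g v = v) ∧ (∃ w : T.V, T.act g w ≠ w)

/-- Genuine abelian type: `G` fixes an end and `T` is not a line. -/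
def GenuineAbelian : Prop := T.FixesEnd ∧ ¬T.IsLine

/-- Irreducibility, via the characterization by hyperbolicity of a commutator. -/
def Irred : Prop :=
  ∃ g h : G, T.Hyperbolic g ∧ T.Hyperbolic h ∧ T.Hyperbolic (g * h * g⁻¹ * h⁻¹)

/-- The image of a dart (oriented edge) under the action of `g`. -/
def dartAct (g : G) (d : T.graph.Dart) : T.graph.Dart :=
  ⟨(T.act g d.toProd.1, T.act g d.toProd.2), T.adj_act g d.toProd.1 d.toProd.2 d.adj⟩

/-- Three oriented edges are aligned (in this order) if some geodesic crosses them
successively, with the correct orientations. -/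
def Aligned (d₁ d₂ d₃ : T.graph.Dart) : Prop :=
  ∃ (u v : T.V) (p : T.graph.Walk u v), p.IsPath ∧ [d₁, d₂, d₃].Sublist p.darts

end GTree

/-- Two `G`-trees lie in the same deformation space iff they have the same elliptic
subgroups. -/
def SameDef (T T' : GTree G) : Prop := ∀ H : Subgroup G, T.Elliptic H ↔ T'.Elliptic H

/-- An equivariant isomorphism of simplicial `G`-trees. -/
def SimpIso (T T' : GTree G) : Prop :=
  ∃ e : T.V ≃ T'.V, (∀ (g : G) (v : T.V), e (T.act g v) = T'.act g (e v)) ∧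
    ∀ u v : T.V, T.graph.Adj u v ↔ T'.graph.Adj (e u) (e v)

end Trees
section Collapses

variable {G : Type u} [Group G]

/-- Two ordered pairs of adjacent vertices span edges in the same `G`-orbit
(as non-oriented edges). -/
def InEdgeOrbit (T : GTree G) (a b c d : T.V) : Prop :=
  ∃ g : G, (T.act g a = c ∧ T.act g b = d) ∨ (T.act g a = d ∧ T.act g b = c)

/-- `c` exhibits `T'` as a (possibly non-elementary) collapse of `T`: it is equivariant,
surjective, sends non-collapsed edges to edges, is onto the edges of `T'`, and its point
preimages are subtrees. -/
def IsCollapseMap (T T' : GTree G) (c : T.V → T'.V) : Prop :=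
  (∀ (g : G) (v : T.V), c (T.act g v) = T'.act g (c v)) ∧
  Function.Surjective c ∧
  (∀ u v : T.V, T.graph.Adj u v → c u ≠ c v → T'.graph.Adj (c u) (c v)) ∧
  (∀ u' v' : T'.V, T'.graph.Adj u' v' → ∃ u v : T.V, T.graph.Adj u v ∧ c u = u' ∧ c v = v') ∧
  (∀ u v : T.V, c u = c v → ∀ p : T.graph.Walk u v, p.IsPath → ∀ w ∈ p.support, c w = c u)

/-- `T'` is obtained from `T` by a (possibly non-elementary) collapse. -/
def CollapseOf (T' T : GTree G) : Prop := ∃ c : T.V → T'.V, IsCollapseMap T T' c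

/-- `T'` is obtained from `T` by collapsing (exactly) all the edges in the orbit of a
single edge. -/
def IsOrbitCollapse (T' T : GTree G) : Prop :=
  ∃ (c : T.V → T'.V) (u₀ v₀ : T.V), T.graph.Adj u₀ v₀ ∧ IsCollapseMap T T' c ∧
    ∀ u v : T.V, T.graph.Adj u v → (c u = c v ↔ InEdgeOrbit T u v u₀ v₀)

/-- An elementary collapse: collapsing the orbit of a collapsible edge, i.e. an orbit
collapse staying in the same deformation space. -/
def ElemCollapse (T T' : GTree G) : Prop := IsOrbitCollapse T' T ∧ SameDef T T'

/-- An elementary move: an elementary collapse or an elementary expansion. -/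
def ElemMove (T T' : GTree G) : Prop := ElemCollapse T T' ∨ ElemCollapse T' T

/-- An elementary deformation: a finite sequence of elementary collapses and expansions. -/
def ElemDeformation (T T' : GTree G) : Prop := Relation.ReflTransGen ElemMove T T'

/-- A slide move: an edge `f = vx` with `G_f ≤ G_e` slides across `e = vw` (and
equivariantly so does its orbit), becoming an edge `f' = wx`. -/
def SlideMove (T T' : GTree G) : Prop :=
  ∃ (e : T.V ≃ T'.V) (v w x : T.V),
    T.graph.Adj v w ∧ T.graph.Adj v x ∧ w ≠ x ∧
    T.edgeStab v x ≤ T.edgeStab v w ∧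
    ¬InEdgeOrbit T v w v x ∧
    (∀ (g : G) (u : T.V), e (T.act g u) = T'.act g (e u)) ∧
    (∀ a b : T.V, T'.graph.Adj (e a) (e b) ↔
      ((T.graph.Adj a b ∧ ¬InEdgeOrbit T a b v x) ∨ InEdgeOrbit T a b w x))

end Collapses

section MetricTrees

variable (G : Type u) [Group G]

/-- A metric `G`-tree: a simplicial `G`-tree together with an equivariant assignment of
positive lengths to the edges. -/
structure MGTree extends GTree G : Type (u + 1) where
  len : V → V → ℝ
  len_symm : ∀ u v : V, len u v = len v u
  len_pos : ∀ u v : V, graph.Adj u v → 0 < len u v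
  len_equivariant : ∀ (g : G) (u v : V), len (act g u) (act g v) = len u v

variable {G}

namespace MGTree

variable (T : MGTree G)

/-- The length of a walk. -/
noncomputable def walkLen {u v : T.V} (p : T.graph.Walk u v) : ℝ :=
  (p.darts.map fun d => T.len d.toProd.1 d.toProd.2).sum

/-- The distance between two vertices: the length of the unique reduced path joining them. -/
noncomputable def dist (u v : T.V) : ℝ :=
  sInf {x : ℝ | ∃ p : T.graph.Walk u v, p.IsPath ∧ x = T.walkLen p}

/-- The translation length of `g`. -/
noncomputable def ell (g : G) : ℝ :=
  sInf {x : ℝ | ∃ v : T.V, x = T.dist v (T.act g v)}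

/-- The axis (or characteristic set) of `g`: the set of points moved exactly `ℓ(g)`. -/
def Axis (g : G) : Set T.V := {v : T.V | T.dist v (T.act g v) = T.ell g}

/-- `T` is abelian: its length function is the absolute value of a homomorphism to `ℝ`
with cyclic image. -/
def IsAbelian : Prop :=
  ∃ φ : G → ℝ, (∀ g h : G, φ (g * h) = φ g + φ h) ∧
    (∃ a : ℝ, ∀ g : G, ∃ n : ℤ, φ g = (n : ℝ) * a) ∧
    ∀ g : G, T.ell g = |φ g|

/-- Irreducibility for metric trees: two hyperbolic elements with disjoint axes. -/
def Irr : Prop :=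
  ∃ g h : G, T.toGTree.Hyperbolic g ∧ T.toGTree.Hyperbolic h ∧ T.Axis g ∩ T.Axis h = ∅

end MGTree

/-- An equivariant simplicial isomorphism multiplying all edge lengths by `c`. -/
def EquivHomothety (c : ℝ) (T T' : MGTree G) : Prop :=
  ∃ e : T.V ≃ T'.V, (∀ (g : G) (v : T.V), e (T.act g v) = T'.act g (e v)) ∧
    (∀ u v : T.V, T.graph.Adj u v ↔ T'.graph.Adj (e u) (e v)) ∧
    ∀ u v : T.V, T.graph.Adj u v → T'.len (e u) (e v) = c * T.len u v

/-- An equivariant isometry of metric `G`-trees. -/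
def EquivIsometric (T T' : MGTree G) : Prop := EquivHomothety 1 T T'

/-- The action of an automorphism of `G` on metric `G`-trees, by precomposition. -/
def MGTree.precomp (φ : MulAut G) (T : MGTree G) : MGTree G where
  V := T.V
  nonempty := T.nonempty
  graph := T.graph
  isTree := T.isTree
  act := T.act.comp φ.toMonoidHom
  adj_act := fun g u v h => T.adj_act (φ g) u v h
  noInversion := fun g u v h => T.noInversion (φ g) u v h
  minimal := fun S h1 h2 h3 => T.minimal S h1
    (fun g v hv => by simpa using h2 (φ.symm g) v hv) h3
  len := T.len
  len_symm := T.len_symm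
  len_pos := T.len_pos
  len_equivariant := fun g u v => T.len_equivariant (φ g) u v

end MetricTrees
section Topologies

variable (G : Type u) [Group G]

/-- Basic Gromov–Hausdorff neighbourhood of the metric `G`-tree `T` determined by finite
sets `X ⊆ T`, `A ⊆ G` and `ε > 0`: the trees admitting an `ε`-approximate equivariant
lift of `X`. -/
def gromovBasic (T : MGTree G) (X : Finset T.V) (A : Finset G) (ε : ℝ) : Set (MGTree G) :=
  {T' : MGTree G | ∃ f : T.V → T'.V, ∀ x ∈ X, ∀ y ∈ X, ∀ g ∈ A,
    |T.dist x (T.act g y) - T'.dist (f x) (T'.act g (f y))| < ε}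

/-- The equivariant Gromov–Hausdorff topology on the space of metric `G`-trees. -/
noncomputable def gromovTop : TopologicalSpace (MGTree G) where
  IsOpen U := ∀ T ∈ U, ∃ (X : Finset T.V) (A : Finset G) (ε : ℝ), 0 < ε ∧
    gromovBasic G T X A ε ⊆ U
  isOpen_univ := fun T _ => ⟨∅, ∅, 1, one_pos, Set.subset_univ _⟩
  isOpen_inter := by
    intro U V hU hV T hT
    obtain ⟨X₁, A₁, ε₁, hε₁, h₁⟩ := hU T hT.1
    obtain ⟨X₂, A₂, ε₂, hε₂, h₂⟩ := hV T hT.2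
    refine ⟨X₁ ∪ X₂, A₁ ∪ A₂, min ε₁ ε₂, lt_min hε₁ hε₂, ?_⟩
    intro T' hT'
    obtain ⟨f, hf⟩ := hT'
    constructor
    · exact h₁ ⟨f, fun x hx y hy g hg =>
        lt_of_lt_of_le (hf x (Finset.mem_union_left _ hx) y (Finset.mem_union_left _ hy) g
          (Finset.mem_union_left _ hg)) (min_le_left _ _)⟩
    · exact h₂ ⟨f, fun x hx y hy g hg =>
        lt_of_lt_of_le (hf x (Finset.mem_union_right _ hx) y (Finset.mem_union_right _ hy) g
          (Finset.mem_union_right _ hg)) (min_le_right _ _)⟩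
  isOpen_sUnion := by
    intro s hs T hT
    obtain ⟨U, hUs, hTU⟩ := hT
    obtain ⟨X, A, ε, hε, h⟩ := hs U hUs T hTU
    exact ⟨X, A, ε, hε, h.trans (Set.subset_sUnion_of_mem hUs)⟩

variable {G}

/-- The closed cone of the (restricted) deformation space `D` spanned by `T`: the trees
of `D` obtained from trees having the same underlying simplicial tree as `T` by
(elementary) collapses. -/
def closedCone (D : Set (MGTree G)) (T : MGTree G) : Set (MGTree G) :=
  {T' : MGTree G | T' ∈ D ∧ CollapseOf T'.toGTree T.toGTree}

/-- The open cone containing `T`: the trees with the same underlying simplicial tree. -/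
def openCone (D : Set (MGTree G)) (T : MGTree G) : Set (MGTree G) :=
  {T' : MGTree G | T' ∈ D ∧ SimpIso T'.toGTree T.toGTree}

variable (G)

/-- The weak topology on a deformation space `D`: a set is closed if and only if its
intersection with every closed cone of `D` is closed (each closed cone carrying the
Gromov topology). -/
noncomputable def weakTop (D : Set (MGTree G)) : TopologicalSpace ↥D :=
  ⨆ (T : MGTree G) (_ : T ∈ D), TopologicalSpace.coinduced
    (fun x : {S : MGTree G // S ∈ closedCone D T} => (⟨x.1, x.2.1⟩ : ↥D))
    (TopologicalSpace.induced (fun x : {S : MGTree G // S ∈ closedCone D T} => x.1)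
      (gromovTop G))

variable {G}

/-- The projectivizing relation on a deformation space: agreement up to rescaling, i.e.
equivariant homothety. -/
def projRel (D : Set (MGTree G)) (a b : ↥D) : Prop :=
  ∃ c : ℝ, 0 < c ∧ EquivHomothety c a.1 b.1

/-- The relation of equivariant isometry on a deformation space. -/
def isomRel (D : Set (MGTree G)) (a b : ↥D) : Prop := EquivIsometric a.1 b.1

end Topologies

section Morphisms

variable {G : Type u} [Group G]

/-- A morphism of simplicial `G`-trees: an equivariant map sending each edge onto a
non-degenerate edge path (obtained by subdividing the edge into finitely many subsegments,
each mapped bijectively onto an edge). -/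
structure GMorphism (T T' : GTree G) where
  f : T.V → T'.V
  equivariant : ∀ (g : G) (v : T.V), f (T.act g v) = T'.act g (f v)
  edgeWalk : ∀ u v : T.V, T.graph.Adj u v → T'.graph.Walk (f u) (f v)
  edgeWalk_ne_nil : ∀ (u v : T.V) (h : T.graph.Adj u v), ¬(edgeWalk u v h).Nil
  edgeWalk_symm : ∀ (u v : T.V) (h : T.graph.Adj u v),
    (edgeWalk v u h.symm).support = (edgeWalk u v h).support.reverse
  edgeWalk_equivariant : ∀ (g : G) (u v : T.V) (h : T.graph.Adj u v),
    (edgeWalk (T.act g u) (T.act g v) (T.adj_act g u v h)).support =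
      (edgeWalk u v h).support.map (fun x => T'.act g x)

/-- `H` is bi-elliptic in `T`: it fixes two distinct points. -/
def BiElliptic (T : GTree G) (H : Subgroup G) : Prop :=
  ∃ u v : T.V, u ≠ v ∧ ∀ h ∈ H, T.act h u = u ∧ T.act h v = v

/-- `H` is a generalized edge group of `T`: it is squeezed between two edge stabilizers. -/
def GenEdgeGroup (T : GTree G) (H : Subgroup G) : Prop :=
  ∃ u v u' v' : T.V, T.graph.Adj u v ∧ T.graph.Adj u' v' ∧
    T.edgeStab u v ≤ H ∧ H ≤ T.edgeStab u' v'

/-- `H` belongs to `𝒜_min` (relative to the deformation space of `T₀`): it fixes an edge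
in every tree of the deformation space. -/
def Amin (T₀ : GTree G) (H : Subgroup G) : Prop :=
  ∀ T : GTree G, SameDef T₀ T → ∃ u v : T.V, T.graph.Adj u v ∧ H ≤ T.edgeStab u v

/-- A maximal elliptic subgroup (of the deformation space of `T₀`). -/
def MaxElliptic (T₀ : GTree G) (H : Subgroup G) : Prop :=
  T₀.Elliptic H ∧ ∀ K : Subgroup G, T₀.Elliptic K → H ≤ K → K = H

end Morphisms

section OutG

variable (G : Type u) [Group G]

instance innRange_normal : ((MulAut.conj : G →* MulAut G).range).Normal := by
  constructor
  intro a ha φ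
  obtain ⟨g, rfl⟩ := ha
  refine ⟨φ g, ?_⟩
  ext x
  simp only [MulAut.mul_apply, MulAut.conj_apply, map_mul, map_inv]
  simp [MulAut.inv_def]

/-- The outer automorphism group of `G`. -/
def OutG := MulAut G ⧸ (MulAut.conj : G →* MulAut G).range

noncomputable instance : Group (OutG G) := QuotientGroup.Quotient.group _

/-- The class of an automorphism in `Out(G)`. -/
def toOutG (φ : MulAut G) : OutG G := QuotientGroup.mk φ

end OutG
section RealTrees

variable (G : Type u) [Group G]

/-- A non-trivial minimal `ℝ`-tree with an isometric action of `G`: a geodesic metric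
space in which any two points are joined by a unique arc. -/
structure RGTree : Type (u + 1) where
  X : Type u
  [ms : MetricSpace X]
  nontrivial : Nontrivial X
  geodesic : ∀ x y : X, ∃ f : ℝ → X, f 0 = x ∧ f (dist x y) = y ∧
    ∀ s ∈ Set.Icc (0 : ℝ) (dist x y), ∀ t ∈ Set.Icc (0 : ℝ) (dist x y),
      dist (f s) (f t) = |s - t|
  unique_arc : ∀ (x y : X) (γ : Set.Icc (0 : ℝ) 1 → X), Continuous γ →
    Function.Injective γ → γ ⟨0, by constructor <;> norm_num⟩ = x →
    γ ⟨1, by constructor <;> norm_num⟩ = y →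
    ∀ z ∈ Set.range γ, dist x z + dist z y = dist x y
  act : G →* Equiv.Perm X
  isom : ∀ g : G, Isometry (act g)
  minimal : ∀ S : Set X, S.Nonempty → (∀ (g : G), ∀ x ∈ S, act g x ∈ S) →
    (∀ x ∈ S, ∀ y ∈ S, ∀ z : X, dist x z + dist z y = dist x y → z ∈ S) →
    S = Set.univ

attribute [instance] RGTree.ms

variable {G}

namespace RGTree

variable (R : RGTree G)

/-- `z` lies between `x` and `y` (i.e. on the arc from `x` to `y`). -/
def Btw (x z y : R.X) : Prop := dist x z + dist z y = dist x y

/-- A subgroup is elliptic if it fixes a point. -/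
def Elliptic (H : Subgroup G) : Prop := ∃ x : R.X, ∀ h ∈ H, R.act h x = x

/-- A hyperbolic element fixes no point. -/
def Hyperbolic (g : G) : Prop := ∀ x : R.X, R.act g x ≠ x

/-- The translation length of `g`. -/
noncomputable def ell (g : G) : ℝ :=
  sInf {r : ℝ | ∃ x : R.X, r = dist x (R.act g x)}

/-- The characteristic set of `g`: its axis if `g` is hyperbolic, its fixed point set
if `g` is elliptic. -/
def Axis (g : G) : Set R.X := {x : R.X | dist x (R.act g x) = R.ell g}

/-- The fixed point set of `g`. -/
def Fix (g : G) : Set R.X := {x : R.X | R.act g x = x}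

/-- The fixed point set of a subgroup. -/
def FixSub (H : Subgroup G) : Set R.X := {x : R.X | ∀ h ∈ H, R.act h x = x}

/-- Irreducibility: two hyperbolic elements with disjoint characteristic sets. -/
def Irr : Prop :=
  ∃ g h : G, R.Hyperbolic g ∧ R.Hyperbolic h ∧ R.Axis g ∩ R.Axis h = ∅

/-- The distance between the characteristic sets of `g` and `h`. -/
noncomputable def axesDist (g h : G) : ℝ :=
  sInf {r : ℝ | ∃ x ∈ R.Axis g, ∃ y ∈ R.Axis h, r = dist x y}

end RGTree

/-- `f` realizes the metric simplicial `G`-tree `T` inside the `ℝ`-tree `R`. -/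
def IsRealizationMap (R : RGTree G) (T : MGTree G) (f : T.V → R.X) : Prop :=
  (∀ (g : G) (v : T.V), f (T.act g v) = R.act g (f v)) ∧
  (∀ u v : T.V, dist (f u) (f v) = T.dist u v) ∧
  ∀ x : R.X, ∃ u v : T.V, T.graph.Adj u v ∧ R.Btw (f u) x (f v)

/-- The `ℝ`-tree `R` is (equivariantly isometric to) the geometric realization of the
metric simplicial `G`-tree `T`. -/
def RealizationOf (R : RGTree G) (T : MGTree G) : Prop := ∃ f : T.V → R.X, IsRealizationMap R T f

variable (G)

/-- The equivariant Gromov–Hausdorff topology on the space of `ℝ`-trees. -/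
noncomputable def gromovTopR : TopologicalSpace (RGTree G) where
  IsOpen U := ∀ R ∈ U, ∃ (X : Finset R.X) (A : Finset G) (ε : ℝ), 0 < ε ∧
    {R' : RGTree G | ∃ f : R.X → R'.X, ∀ x ∈ X, ∀ y ∈ X, ∀ g ∈ A,
      |dist x (R.act g y) - dist (f x) (R'.act g (f y))| < ε} ⊆ U
  isOpen_univ := fun R _ => ⟨∅, ∅, 1, one_pos, Set.subset_univ _⟩
  isOpen_inter := by
    intro U V hU hV R hR
    obtain ⟨X₁, A₁, ε₁, hε₁, h₁⟩ := hU R hR.1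
    obtain ⟨X₂, A₂, ε₂, hε₂, h₂⟩ := hV R hR.2
    refine ⟨X₁ ∪ X₂, A₁ ∪ A₂, min ε₁ ε₂, lt_min hε₁ hε₂, ?_⟩
    rintro R' ⟨f, hf⟩
    constructor
    · exact h₁ ⟨f, fun x hx y hy g hg =>
        lt_of_lt_of_le (hf x (Finset.mem_union_left _ hx) y (Finset.mem_union_left _ hy) g
          (Finset.mem_union_left _ hg)) (min_le_left _ _)⟩
    · exact h₂ ⟨f, fun x hx y hy g hg =>
        lt_of_lt_of_le (hf x (Finset.mem_union_right _ hx) y (Finset.mem_union_right _ hy) g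
          (Finset.mem_union_right _ hg)) (min_le_right _ _)⟩
  isOpen_sUnion := by
    intro s hs R hR
    obtain ⟨U, hUs, hRU⟩ := hR
    obtain ⟨X, A, ε, hε, h⟩ := hs U hUs R hRU
    exact ⟨X, A, ε, hε, h.trans (Set.subset_sUnion_of_mem hUs)⟩

/-- The axes topology: the coarsest topology making all translation length functions
continuous. -/
noncomputable def axesTopR : TopologicalSpace (RGTree G) :=
  TopologicalSpace.induced (fun (R : RGTree G) (g : G) => R.ell g) Pi.topologicalSpace

variable {G}

/-- A morphism of `ℝ`-trees: an equivariant map such that every segment is a finite union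
of subsegments on each of which the map is isometric. -/
structure RMorphism (R S : RGTree G) where
  f : R.X → S.X
  equivariant : ∀ (g : G) (x : R.X), f (R.act g x) = S.act g (f x)
  piecewise : ∀ x y : R.X, ∃ (n : ℕ) (c : Fin (n + 1) → R.X),
    c 0 = x ∧ c (Fin.last n) = y ∧ (∀ i : Fin (n + 1), R.Btw x (c i) y) ∧
    ∀ i : Fin n, ∀ p q : R.X, R.Btw (c i.castSucc) p (c i.succ) →
      R.Btw (c i.castSucc) q (c i.succ) → dist (f p) (f q) = dist p q

/-- `M` is the intermediate tree at time `t` of Skora's deformation of the morphism `φ`: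
the quotient of the source in which `x` and `y` are identified exactly when `φ` maps the
segment `[x,y]` into the ball of radius `t` around `φ(x) = φ(y)`. -/
def IsSkoraIntermediate {R S : RGTree G} (φ : RMorphism R S) (t : ℝ) (M : RGTree G) : Prop :=
  ∃ (p : R.X → M.X) (q : M.X → S.X), Function.Surjective p ∧
    (∀ (g : G) (x : R.X), p (R.act g x) = M.act g (p x)) ∧
    (∀ (g : G) (m : M.X), q (M.act g m) = S.act g (q m)) ∧
    (∀ x : R.X, q (p x) = φ.f x) ∧
    (∀ x y : R.X, dist (p x) (p y) ≤ dist x y) ∧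
    (∀ m m' : M.X, dist (q m) (q m') ≤ dist m m') ∧
    ∀ x y : R.X, p x = p y ↔ (φ.f x = φ.f y ∧
      ∀ z : R.X, R.Btw x z y → dist (φ.f z) (φ.f x) ≤ t)

/-- `P` is the basepoint of `R` determined by `g` and `h` (the endpoint of the
intersection of the two characteristic sets, resp. the projection of one onto the other),
characterized by the metric system (1) of [Guirardel–Levitt]. -/
noncomputable def IsBasepoint (R : RGTree G) (g h : G) (P : R.X) : Prop :=
  dist P (R.act g P) = R.ell g ∧
  dist P (R.act h P) = R.ell h + 2 * R.axesDist g h ∧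
  dist (R.act g P) (R.act h P) = R.ell g + R.ell h + 2 * R.axesDist g h ∧
  dist (R.act g P) (R.act h⁻¹ P) = R.ell g + R.ell h + 2 * R.axesDist g h

/-- `p` is a projection of `x` to the set `S` (a closest point of `S`). -/
def IsProj (R : RGTree G) (x : R.X) (S : Set R.X) (p : R.X) : Prop :=
  p ∈ S ∧ ∀ q ∈ S, dist x p ≤ dist x q

/-- Equivariant isometry of `ℝ`-trees. -/
def RIsom (R R' : RGTree G) : Prop :=
  ∃ e : R.X ≃ R'.X, (∀ (g : G) (x : R.X), e (R.act g x) = R'.act g (e x)) ∧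
    ∀ x y : R.X, dist (e x) (e y) = dist x y

/-- Equivariant homothety of `ℝ`-trees, with ratio `c`. -/
def RHomothety (c : ℝ) (R R' : RGTree G) : Prop :=
  ∃ e : R.X ≃ R'.X, (∀ (g : G) (x : R.X), e (R.act g x) = R'.act g (e x)) ∧
    ∀ x y : R.X, dist (e x) (e y) = c * dist x y

end RealTrees
section MoreDefs

variable {G : Type u} [Group G]

/-- `H` is contained in a conjugate of `K`. -/
def ConjLe (H K : Subgroup G) : Prop := ∃ g : G, ∀ h ∈ H, g * h * g⁻¹ ∈ K

/-- `H` represents a maximal element of the vertical set `ℳ` associated to the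
deformation space of `T₀`. -/
def MaxVert (T₀ : GTree G) (H : Subgroup G) : Prop :=
  T₀.Elliptic H ∧ ∀ K : Subgroup G, T₀.Elliptic K → ConjLe H K → ConjLe K H

/-- The vertical set `ℳ`: equivalence classes of maximal elements for containment in a
conjugate, among elliptic subgroups. -/
def vertSet (T₀ : GTree G) : Type u :=
  Quot (fun H K : {H : Subgroup G // MaxVert T₀ H} => ConjLe H.1 K.1 ∧ ConjLe K.1 H.1)

namespace GTree

variable (T : GTree G)

/-- The set of `G`-orbits of vertices (the vertices of the quotient graph `T/G`). -/
def vertexOrbits : Type u := Quot (fun u v : T.V => ∃ g : G, T.act g u = v)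

/-- Orbits of neighbours of `v` under the stabilizer of `v`: the oriented edges of the
quotient graph of groups issued from the image of `v`, whose number is the valence of
the image of `v`. -/
def nbrOrbits (v : T.V) : Type u :=
  Quot (fun a b : {w : T.V // T.graph.Adj v w} => ∃ g : G, T.act g v = v ∧ T.act g a.1 = b.1)

/-- The set of `G`-orbits of (non-oriented) edges. -/
def edgeOrbits : Type u :=
  Quot (fun d d' : T.graph.Dart => ∃ g : G, T.dartAct g d = d' ∨ T.dartAct g d = d'.symm)

/-- BF-reduced: if an edge-to-vertex inclusion `G_e → G_u` is onto, then the image of `u`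
in the quotient graph has valence at least 3. -/
def BFReduced : Prop :=
  ∀ u w : T.V, T.graph.Adj u w → T.stab u ≤ T.stab w →
    3 ≤ Cardinal.mk (T.nbrOrbits u)

end GTree

/-- The quotient graph of groups of `T` has a strict ascending loop: an edge whose
endpoints are in the same orbit, exactly one of the two edge-to-vertex inclusions
being onto. -/
def HasSAL (T : GTree G) : Prop :=
  ∃ u v : T.V, T.graph.Adj u v ∧ (∃ g : G, T.act g u = v) ∧
    Xor' (T.stab u ≤ T.stab v) (T.stab v ≤ T.stab u)

/-- The edge (orbit of) `uv` is a surviving edge: `T` can be made reduced by a collapse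
(within its deformation space) not collapsing `uv`. -/
def Surviving (T : GTree G) (u v : T.V) : Prop :=
  ∃ (T' : GTree G) (c : T.V → T'.V), IsCollapseMap T T' c ∧ SameDef T T' ∧
    T'.Reduced ∧ c u ≠ c v

/-- Containment in a conjugate by an element of `G₀`. -/
def perLe (G₀ : Subgroup G) (H K : Subgroup G) : Prop :=
  ∃ g ∈ G₀, ∀ h ∈ H, g * h * g⁻¹ ∈ K

/-- `H` represents a maximal element of the peripheral structure `ℳ₀` of `G₀`. -/
def PeriphMax (T₀ : GTree G) (G₀ : Subgroup G) (H : Subgroup G) : Prop :=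
  H ≤ G₀ ∧ Amin T₀ H ∧
    ∀ K : Subgroup G, K ≤ G₀ → Amin T₀ K → perLe G₀ H K → perLe G₀ K H

/-- The peripheral structure `ℳ₀` of `G₀`, as a set of equivalence classes. -/
def periphSet (T₀ : GTree G) (G₀ : Subgroup G) : Type u :=
  Quot (fun H K : {H : Subgroup G // PeriphMax T₀ G₀ H} =>
    perLe G₀ H.1 K.1 ∧ perLe G₀ K.1 H.1)

end MoreDefs
namespace Lemma57

open SimpleGraph

variable {V : Type u} {Γ : SimpleGraph V}

/-- The geodesic (unique path) between two vertices of a tree. -/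
noncomputable def geo (hΓ : Γ.IsTree) (a b : V) : Γ.Walk a b :=
  (hΓ.existsUnique_path a b).choose

lemma geo_isPath (hΓ : Γ.IsTree) (a b : V) : (geo hΓ a b).IsPath :=
  (hΓ.existsUnique_path a b).choose_spec.1

lemma geo_eq (hΓ : Γ.IsTree) {a b : V} {p : Γ.Walk a b} (hp : p.IsPath) : p = geo hΓ a b :=
  (hΓ.existsUnique_path a b).choose_spec.2 p hp

lemma geo_self (hΓ : Γ.IsTree) (a : V) : geo hΓ a a = Walk.nil :=
  (geo_eq hΓ (Walk.IsPath.nil)).symm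

lemma geo_reverse (hΓ : Γ.IsTree) (a b : V) : geo hΓ b a = (geo hΓ a b).reverse :=
  ((geo_eq hΓ ((geo_isPath hΓ a b).reverse))).symm

/-- `x` lies on the head side of the dart `d`. -/
def side (hΓ : Γ.IsTree) (d : Γ.Dart) (x : V) : Prop :=
  d.snd ∈ (geo hΓ d.fst x).support

lemma side_snd (hΓ : Γ.IsTree) (d : Γ.Dart) : side hΓ d d.snd := by
  unfold side
  rw [← geo_eq hΓ (p := Walk.cons d.adj Walk.nil) (by simp [Walk.cons_isPath_iff, d.fst_ne_snd])]
  simp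

lemma not_side_fst (hΓ : Γ.IsTree) (d : Γ.Dart) : ¬ side hΓ d d.fst := by
  unfold side
  rw [geo_self]
  simp [d.snd_ne_fst]

/-- If `x` is on the head side of `d`, then `d.fst` is not on the geodesic from `d.snd` to `x`. -/
lemma side_not_mem (hΓ : Γ.IsTree) {d : Γ.Dart} {x : V} (h : side hΓ d x) :
    d.fst ∉ (geo hΓ d.snd x).support := by
  intro hmem
  have hspec := (geo hΓ d.fst x).take_spec (u := d.snd) h
  have hnodup : ((geo hΓ d.fst x).support).Nodup := (geo_isPath hΓ d.fst x).support_nodup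
  have hdrop : ((geo hΓ d.fst x).dropUntil d.snd h) = geo hΓ d.snd x :=
    geo_eq hΓ ((geo_isPath hΓ d.fst x).dropUntil h)
  rw [← hspec, Walk.support_append, List.nodup_append] at hnodup
  have h1 : d.fst ∈ ((geo hΓ d.fst x).takeUntil d.snd h).support := Walk.start_mem_support _
  have h2 : d.fst ∈ ((geo hΓ d.fst x).dropUntil d.snd h).support.tail := by
    rw [hdrop]
    have := (geo hΓ d.snd x).support_eq_cons
    rw [this] at hmem
    rcases List.mem_cons.mp hmem with h | h
    · exact absurd h d.fst_ne_snd
    · exact h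
  exact hnodup.2.2 _ h1 _ h2 rfl

lemma side_symm_of_not_side (hΓ : Γ.IsTree) {d : Γ.Dart} {x : V} (h : ¬ side hΓ d x) :
    side hΓ d.symm x := by
  by_contra h2
  -- h2 : d.fst ∉ (geo d.snd x).support
  unfold side at h2
  have : (Walk.cons d.adj (geo hΓ d.snd x)).IsPath :=
    (geo_isPath hΓ d.snd x).cons (by exact h2)
  have heq := geo_eq hΓ this
  apply h
  unfold side
  rw [← heq]
  simp [Walk.support_cons]

lemma not_side_symm_of_side (hΓ : Γ.IsTree) {d : Γ.Dart} {x : V} (h : side hΓ d x) :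
    ¬ side hΓ d.symm x := by
  intro h2
  exact side_not_mem hΓ h h2

lemma side_symm_iff (hΓ : Γ.IsTree) (d : Γ.Dart) (x : V) :
    side hΓ d.symm x ↔ ¬ side hΓ d x := by
  constructor
  · intro h hs; exact not_side_symm_of_side hΓ hs h
  · exact side_symm_of_not_side hΓ


-- chunk 2 starts here

lemma geo_of_adj (hΓ : Γ.IsTree) {x a : V} (h : Γ.Adj x a) :
    geo hΓ x a = Walk.cons h Walk.nil :=
  (geo_eq hΓ (by simp [Walk.cons_isPath_iff, h.ne])).symm

/-- The crossing decomposition: if `a` is on the tail side of `d` and `b` on its head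
side, then the geodesic from `a` to `b` crosses `d`. -/
lemma cross (hΓ : Γ.IsTree) {d : Γ.Dart} {a b : V} (ha : ¬ side hΓ d a) (hb : side hΓ d b) :
    geo hΓ a b = (geo hΓ a d.fst).append (Walk.cons d.adj (geo hΓ d.snd b)) := by
  have ha' : d.snd ∉ (geo hΓ d.fst a).support := ha
  have hB : d.fst ∉ (geo hΓ d.snd b).support := side_not_mem hΓ hb
  have hA : d.snd ∉ (geo hΓ a d.fst).support := by
    rw [geo_reverse hΓ d.fst a, Walk.support_reverse]
    simpa using ha'
  have hC : ∀ z, z ∈ (geo hΓ a d.fst).support → z ∈ (geo hΓ d.snd b).support → False := by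
    intro z hz1 hz2
    have hz1' : z ∈ (geo hΓ d.fst a).support := by
      rw [geo_reverse hΓ d.fst a, Walk.support_reverse] at hz1
      simpa using hz1
    have e1 : (geo hΓ d.fst a).takeUntil z hz1' = geo hΓ d.fst z :=
      geo_eq hΓ ((geo_isPath hΓ d.fst a).takeUntil hz1')
    have h1 : d.snd ∉ (geo hΓ d.fst z).support := by
      rw [← e1]
      exact fun hm => ha' (Walk.support_takeUntil_subset _ hz1' hm)
    have e2 : (geo hΓ d.snd b).takeUntil z hz2 = geo hΓ d.snd z :=
      geo_eq hΓ ((geo_isPath hΓ d.snd b).takeUntil hz2)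
    have h2 : d.fst ∉ (geo hΓ d.snd z).support := by
      rw [← e2]
      exact fun hm => hB (Walk.support_takeUntil_subset _ hz2 hm)
    have hW : (Walk.cons d.adj (geo hΓ d.snd z)).IsPath := (geo_isPath hΓ d.snd z).cons h2
    apply h1
    rw [← geo_eq hΓ hW]
    simp
  have hP : ((geo hΓ a d.fst).append (Walk.cons d.adj (geo hΓ d.snd b))).IsPath := by
    rw [Walk.isPath_def, Walk.support_append, Walk.support_cons, List.tail_cons,
      List.nodup_append]
    exact ⟨(geo_isPath hΓ a d.fst).support_nodup, (geo_isPath hΓ d.snd b).support_nodup,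
      fun z hz1 _ hz2 hzw => by subst hzw; exact hC z hz1 hz2⟩
  exact (geo_eq hΓ hP).symm

lemma cross_mem (hΓ : Γ.IsTree) {d : Γ.Dart} {a b : V} (ha : ¬ side hΓ d a)
    (hb : side hΓ d b) :
    d.fst ∈ (geo hΓ a b).support ∧ d.snd ∈ (geo hΓ a b).support := by
  rw [cross hΓ ha hb]
  constructor
  · rw [Walk.mem_support_append_iff]
    exact Or.inl (Walk.end_mem_support _)
  · rw [Walk.mem_support_append_iff]
    right
    simp

lemma side_end_of_mem_darts (hΓ : Γ.IsTree) {a b : V} {p : Γ.Walk a b} (hp : p.IsPath)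
    {d : Γ.Dart} (hd : d ∈ p.darts) : side hΓ d b := by
  induction p with
  | nil => simp at hd
  | @cons a x b h q ih =>
    rw [Walk.darts_cons] at hd
    rcases List.mem_cons.mp hd with rfl | hd
    · show x ∈ (geo hΓ a b).support
      rw [← geo_eq hΓ hp]
      simp
    · exact ih hp.of_cons hd

lemma trap (hΓ : Γ.IsTree) {x a b : V} (h : Γ.Adj x a) {q : Γ.Walk x b}
    (ha : a ∉ q.support) {d : Γ.Dart} (hd : d ∈ q.darts) (hnx : ¬ side hΓ d x) :
    ¬ side hΓ d a := by
  intro hs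
  obtain ⟨h1, h2⟩ := cross_mem hΓ hnx hs
  rw [geo_of_adj hΓ h] at h1 h2
  simp only [Walk.support_cons, Walk.support_nil, List.mem_cons, List.mem_singleton,
    List.not_mem_nil, or_false] at h1 h2
  have hfq := Walk.dart_fst_mem_support_of_mem_darts _ hd
  have hsq := Walk.dart_snd_mem_support_of_mem_darts _ hd
  rcases h1 with h1 | h1
  · rcases h2 with h2 | h2
    · exact d.fst_ne_snd (h1.trans h2.symm)
    · exact ha (h2 ▸ hsq)
  · exact ha (h1 ▸ hfq)

lemma not_side_start_of_mem_darts (hΓ : Γ.IsTree) {a b : V} {p : Γ.Walk a b}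
    (hp : p.IsPath) {d : Γ.Dart} (hd : d ∈ p.darts) : ¬ side hΓ d a := by
  induction p with
  | nil => simp at hd
  | @cons a x b h q ih =>
    rw [Walk.darts_cons] at hd
    have hcons := (Walk.cons_isPath_iff h q).mp hp
    rcases List.mem_cons.mp hd with rfl | hd
    · show ¬ x ∈ (geo hΓ a a).support
      rw [geo_self]
      simp [h.ne']
    · exact trap hΓ h.symm hcons.2 hd (ih hcons.1 hd)

/-- If `[d₁, d₂]` occurs in order along a path, then `d₂.fst` is on the head side of
`d₁`. -/
lemma side_fst_of_pair (hΓ : Γ.IsTree) {a b : V} {p : Γ.Walk a b} (hp : p.IsPath)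
    {d₁ d₂ : Γ.Dart} (hsub : List.Sublist [d₁, d₂] p.darts) : side hΓ d₁ d₂.fst := by
  induction p with
  | nil => simp at hsub
  | @cons a x b h q ih =>
    rw [Walk.darts_cons] at hsub
    have hcons := (Walk.cons_isPath_iff h q).mp hp
    cases hsub with
    | cons _ h' => exact ih hcons.1 h'
    | cons_cons _ h' =>
      have hd2 : d₂ ∈ q.darts := List.singleton_sublist.mp h'
      have hf : d₂.fst ∈ q.support := Walk.dart_fst_mem_support_of_mem_darts _ hd2
      have ht : (q.takeUntil d₂.fst hf).IsPath := hcons.1.takeUntil hf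
      have hW : (Walk.cons h (q.takeUntil d₂.fst hf)).IsPath :=
        ht.cons (fun hm => hcons.2 (Walk.support_takeUntil_subset _ hf hm))
      show x ∈ (geo hΓ a d₂.fst).support
      rw [← geo_eq hΓ hW]
      simp

lemma not_side_pair (hΓ : Γ.IsTree) {a b : V} {p : Γ.Walk a b} (hp : p.IsPath)
    {d₁ d₂ : Γ.Dart} (hsub : List.Sublist [d₁, d₂] p.darts) :
    ¬ side hΓ d₂ d₁.fst ∧ ¬ side hΓ d₂ d₁.snd := by
  induction p with
  | nil => simp at hsub
  | @cons a x b h q ih =>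
    rw [Walk.darts_cons] at hsub
    have hcons := (Walk.cons_isPath_iff h q).mp hp
    cases hsub with
    | cons _ h' => exact ih hcons.1 h'
    | cons_cons _ h' =>
      have hd2 : d₂ ∈ q.darts := List.singleton_sublist.mp h'
      have h2 : ¬ side hΓ d₂ x := not_side_start_of_mem_darts hΓ hcons.1 hd2
      exact ⟨trap hΓ h.symm hcons.2 hd2 h2, h2⟩

lemma side_of_pair_side (hΓ : Γ.IsTree) {a b : V} {p : Γ.Walk a b} (hp : p.IsPath)
    {d₁ d₂ : Γ.Dart} (hsub : List.Sublist [d₁, d₂] p.darts) {x : V} (hx : side hΓ d₂ x) :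
    side hΓ d₁ x := by
  have h1 : ¬ side hΓ d₂ d₁.fst := (not_side_pair hΓ hp hsub).1
  show d₁.snd ∈ (geo hΓ d₁.fst x).support
  rw [cross hΓ h1 hx, Walk.mem_support_append_iff]
  exact Or.inl (side_fst_of_pair hΓ hp hsub)

lemma exists_cons_of_ne (hΓ : Γ.IsTree) {a b : V} (p : Γ.Walk a b) (hne : a ≠ b) :
    ∃ (d : Γ.Dart) (l : List Γ.Dart), d.fst = a ∧ p.darts = d :: l := by
  cases p with
  | nil => exact absurd rfl hne
  | cons h q => exact ⟨⟨(_, _), h⟩, q.darts, rfl, by simp⟩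

/-- Consecutive non-reversing darts form an aligned pair. -/
lemma pair_of_consec (hΓ : Γ.IsTree) {d d' : Γ.Dart} (hc : d.snd = d'.fst)
    (hne : d' ≠ d.symm) :
    ∃ (a b : V) (p : Γ.Walk a b), p.IsPath ∧ List.Sublist [d, d'] p.darts := by
  have hadj : Γ.Adj d.snd d'.snd := hc ▸ d'.adj
  have hq : Γ.Adj d'.fst d'.snd := d'.adj
  refine ⟨d.fst, d'.snd, Walk.cons d.adj ((Walk.cons d'.adj Walk.nil).copy hc.symm rfl),
    ?_, ?_⟩
  · rw [Walk.isPath_def, Walk.support_cons, Walk.support_copy, Walk.support_cons,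
      Walk.support_nil]
    refine List.nodup_cons.mpr ⟨?_, ?_⟩
    · intro hmem
      rcases List.mem_cons.mp hmem with h1 | h1
      · exact d.fst_ne_snd (h1.trans hc.symm)
      · rcases List.mem_singleton.mp h1 with h1
        apply hne
        apply Dart.ext
        have : d'.fst = d.snd := hc.symm
        show d'.toProd = (d.toProd.2, d.toProd.1)
        rw [Prod.ext_iff]
        exact ⟨this, h1.symm⟩
    · simp [d'.fst_ne_snd]
  · rw [Walk.darts_cons, Walk.darts_copy, Walk.darts_cons, Walk.darts_nil]

/-- If `x` beyond `e` and `e.fst` beyond `d̄`, then `e, d` is an aligned pair. -/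
lemma pair_of_side (hΓ : Γ.IsTree) {e d : Γ.Dart} (hne : e ≠ d)
    (h1 : side hΓ e d.snd) (h2 : ¬ side hΓ d e.fst) :
    ∃ (a b : V) (p : Γ.Walk a b), p.IsPath ∧ List.Sublist [e, d] p.darts := by
  have E1 : geo hΓ e.fst d.snd =
      (geo hΓ e.fst d.fst).append (Walk.cons d.adj (geo hΓ d.snd d.snd)) :=
    cross hΓ h2 (side_snd hΓ d)
  have E2 : geo hΓ e.fst d.snd =
      (geo hΓ e.fst e.fst).append (Walk.cons e.adj (geo hΓ e.snd d.snd)) :=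
    cross hΓ (not_side_fst hΓ e) (h1)
  rw [geo_self] at E1 E2
  rw [Walk.nil_append] at E2
  have hd1 : (geo hΓ e.fst d.snd).darts = e :: (geo hΓ e.snd d.snd).darts := by
    rw [E2, Walk.darts_cons]
  have hd2 : (geo hΓ e.fst d.snd).darts =
      (geo hΓ e.fst d.fst).darts ++ [d] := by
    rw [E1, Walk.darts_append, Walk.darts_cons, Walk.darts_nil]
  have hdmem : d ∈ (geo hΓ e.snd d.snd).darts := by
    have : d ∈ (geo hΓ e.fst d.snd).darts := by
      rw [hd2]; simp
    rw [hd1] at this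
    rcases List.mem_cons.mp this with h | h
    · exact absurd h.symm hne
    · exact h
  refine ⟨e.fst, d.snd, geo hΓ e.fst d.snd, geo_isPath hΓ _ _, ?_⟩
  rw [hd1]
  exact List.Sublist.cons₂ _ (List.singleton_sublist.mpr hdmem)

section GTreeLemmas

variable {G : Type u} [Group G]

lemma act_act_inv (T : GTree G) (g : G) (x : T.V) : T.act g (T.act g⁻¹ x) = x := by
  rw [← Equiv.Perm.mul_apply, ← map_mul]
  simp

lemma act_inv_act (T : GTree G) (g : G) (x : T.V) : T.act g⁻¹ (T.act g x) = x := by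
  rw [← Equiv.Perm.mul_apply, ← map_mul]
  simp

/-- The action of `g` as a graph homomorphism. -/
def actHom (T : GTree G) (g : G) : T.graph →g T.graph where
  toFun := T.act g
  map_rel' := fun h => T.adj_act g _ _ h

lemma actHom_injective (T : GTree G) (g : G) : Function.Injective (actHom T g) :=
  (T.act g).injective

lemma geo_map (T : GTree G) (g : G) (a b : T.V) :
    geo T.isTree (T.act g a) (T.act g b) = (geo T.isTree a b).map (actHom T g) :=
  (geo_eq T.isTree ((geo T.isTree a b).map_isPath_of_injective (actHom_injective T g)
    (geo_isPath T.isTree a b))).symm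

lemma dartAct_dartAct_inv (T : GTree G) (g : G) (d : T.graph.Dart) :
    T.dartAct g (T.dartAct g⁻¹ d) = d := by
  apply SimpleGraph.Dart.ext
  show (T.act g (T.act g⁻¹ d.toProd.1), T.act g (T.act g⁻¹ d.toProd.2)) = d.toProd
  rw [act_act_inv, act_act_inv]

lemma dartAct_symm (T : GTree G) (g : G) (d : T.graph.Dart) :
    (T.dartAct g d).symm = T.dartAct g d.symm := by
  apply SimpleGraph.Dart.ext
  rfl

lemma side_dartAct (T : GTree G) (g : G) (d : T.graph.Dart) (x : T.V) :
    side T.isTree (T.dartAct g d) (T.act g x) ↔ side T.isTree d x := by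
  show T.act g d.snd ∈ (geo T.isTree (T.act g d.fst) (T.act g x)).support ↔ _
  rw [geo_map]
  show (actHom T g) d.snd ∈ ((geo T.isTree d.fst x).map (actHom T g)).support ↔ _
  rw [SimpleGraph.Walk.support_map, List.mem_map]
  constructor
  · rintro ⟨z, hz, hz2⟩
    have : z = d.snd := (T.act g).injective hz2
    subst this
    exact hz
  · intro h
    exact ⟨d.snd, h, rfl⟩

lemma interior_two_nbrs {V' : Type u} {Γ : SimpleGraph V'} {u v w : V'}
    (p : Γ.Walk u v) (hp : p.IsPath) (hw : w ∈ p.support) (hwu : w ≠ u) (hwv : w ≠ v) :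
    ∃ w₁ w₂ : V', Γ.Adj w w₁ ∧ Γ.Adj w w₂ ∧ w₁ ≠ w₂ := by
  induction p with
  | nil => simp at hw; exact absurd hw hwu
  | @cons u x v h q ih =>
    have hcons := (SimpleGraph.Walk.cons_isPath_iff h q).mp hp
    rw [SimpleGraph.Walk.support_cons] at hw
    rcases List.mem_cons.mp hw with rfl | hw
    · exact absurd rfl hwu
    · by_cases hwx : w = x
      · subst hwx
        cases q with
        | nil => exact absurd rfl hwv
        | @cons _ y _ h' q' =>
          refine ⟨u, y, h.symm, h', ?_⟩
          intro huy
          apply hcons.2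
          rw [huy, SimpleGraph.Walk.support_cons]
          exact List.mem_cons_of_mem _ (SimpleGraph.Walk.start_mem_support q')
      · exact ih hcons.1 hw hwx hwv

lemma exists_two_nbrs (T : GTree G) (hE : ∃ a b : T.V, T.graph.Adj a b) :
    ∀ v : T.V, ∃ w₁ w₂ : T.V, T.graph.Adj v w₁ ∧ T.graph.Adj v w₂ ∧ w₁ ≠ w₂ := by
  classical
  obtain ⟨a, b, hab⟩ := hE
  set S : Set T.V := {v : T.V | ∃ w₁ w₂ : T.V, T.graph.Adj v w₁ ∧ T.graph.Adj v w₂ ∧ w₁ ≠ w₂}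
    with hSdef
  have hSne : S.Nonempty := by
    by_contra hS
    rw [Set.not_nonempty_iff_eq_empty] at hS
    have huniq : ∀ v w₁ w₂ : T.V, T.graph.Adj v w₁ → T.graph.Adj v w₂ → w₁ = w₂ := by
      intro v w₁ w₂ h1 h2
      by_contra hne
      have : v ∈ S := ⟨w₁, w₂, h1, h2, hne⟩
      rw [hS] at this
      exact this
    have claim1 : ∀ (v : T.V) (p : T.graph.Walk a v), p.IsPath → v = a ∨ v = b := by
      intro v p hp
      cases p with
      | nil => exact Or.inl rfl
      | @cons _ x _ h q =>
        have hxb : x = b := huniq a x b h hab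
        cases q with
        | nil => exact Or.inr hxb
        | @cons _ y _ h' q' =>
          have hya : y = a := huniq x y a h' (by rw [hxb]; exact hab.symm)
          exfalso
          apply ((SimpleGraph.Walk.cons_isPath_iff _ _).mp hp).2
          rw [SimpleGraph.Walk.support_cons]
          apply List.mem_cons_of_mem
          rw [← hya]
          exact SimpleGraph.Walk.start_mem_support q'
    have claim2 : ∀ v : T.V, v = a ∨ v = b := by
      intro v
      obtain ⟨W⟩ := T.isTree.isConnected.preconnected a v
      exact claim1 v W.bypass W.bypass_isPath
    have haa : ∀ g : G, T.act g a = a := by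
      intro g
      rcases claim2 (T.act g a) with h | h
      · exact h
      · exfalso
        rcases claim2 (T.act g b) with h2 | h2
        · exact T.noInversion g a b hab ⟨h, h2⟩
        · exact hab.ne ((T.act g).injective (h.trans h2.symm))
    have hmin := T.minimal {a} ⟨a, rfl⟩
      (by
        intro g v hv
        rw [Set.mem_singleton_iff] at hv ⊢
        rw [hv]
        exact haa g)
      (by
        intro u hu v hv p hp w hw
        rw [Set.mem_singleton_iff] at hu hv ⊢
        subst hu; subst hv
        cases p with
        | nil => simpa using hw
        | cons h q =>
          exfalso
          exact ((SimpleGraph.Walk.cons_isPath_iff _ _).mp hp).2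
            (SimpleGraph.Walk.end_mem_support q))
    have : b ∈ ({a} : Set T.V) := by rw [hmin]; trivial
    exact hab.ne' (Set.mem_singleton_iff.mp this)
  have hmin := T.minimal S hSne
    (by
      rintro g v ⟨w₁, w₂, h1, h2, hne⟩
      exact ⟨T.act g w₁, T.act g w₂, T.adj_act g _ _ h1, T.adj_act g _ _ h2,
        fun hh => hne ((T.act g).injective hh)⟩)
    (by
      intro u hu v hv p hp w hw
      by_cases hwu : w = u
      · rwa [hwu]
      by_cases hwv : w = v
      · rwa [hwv]
      exact interior_two_nbrs p hp hw hwu hwv)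
  intro v
  have : v ∈ S := by rw [hmin]; trivial
  exact this

lemma extend_path (T : GTree G) {a b : T.V} (p : T.graph.Walk a b) (hp : p.IsPath)
    (hE : ∃ x y : T.V, T.graph.Adj x y) :
    ∃ (z : T.V) (h : T.graph.Adj b z), (p.concat h).IsPath := by
  obtain ⟨w₁, w₂, h1, h2, hne⟩ := exists_two_nbrs T hE b
  have key : ∀ (w : T.V) (hbw : T.graph.Adj b w), w ∈ p.support →
      p.darts.getLast? = some ⟨(w, b), hbw.symm⟩ := by
    intro w hbw hmem
    have hdrop : p.dropUntil w hmem = SimpleGraph.Walk.cons hbw.symm SimpleGraph.Walk.nil := by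
      rw [geo_eq T.isTree (hp.dropUntil hmem), geo_of_adj T.isTree hbw.symm]
    have hdarts : p.darts = (p.takeUntil w hmem).darts ++ [⟨(w, b), hbw.symm⟩] := by
      conv_lhs => rw [← p.take_spec hmem]
      rw [SimpleGraph.Walk.darts_append, hdrop, SimpleGraph.Walk.darts_cons,
        SimpleGraph.Walk.darts_nil]
    rw [hdarts]
    simp
  have hor : w₁ ∉ p.support ∨ w₂ ∉ p.support := by
    by_contra hcon
    push_neg at hcon
    have e1 := key w₁ h1 hcon.1
    have e2 := key w₂ h2 hcon.2
    rw [e1] at e2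
    have := Option.some.inj e2
    apply hne
    have := congrArg (fun d : T.graph.Dart => d.toProd.1) this
    exact this
  rcases hor with hw | hw
  · refine ⟨w₁, h1, ?_⟩
    rw [SimpleGraph.Walk.isPath_def, SimpleGraph.Walk.support_concat]
    rw [List.nodup_append]
    exact ⟨hp.support_nodup, List.nodup_singleton _, by
      intro z hz y hy hzy
      rw [List.mem_singleton] at hy
      subst hy hzy
      exact hw hz⟩
  · refine ⟨w₂, h2, ?_⟩
    rw [SimpleGraph.Walk.isPath_def, SimpleGraph.Walk.support_concat]
    rw [List.nodup_append]
    exact ⟨hp.support_nodup, List.nodup_singleton _, by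
      intro z hz y hy hzy
      rw [List.mem_singleton] at hy
      subst hy hzy
      exact hw hz⟩

end GTreeLemmas

section Forward

variable {G : Type u} [Group G] {T T' : GTree G}

lemma lift_unique {c : T'.V → T.V} (hc : IsCollapseMap T' T c) {a b : T.V}
    (hab : T.graph.Adj a b) {d' e' : T'.graph.Dart}
    (hd1 : c d'.toProd.1 = a) (hd2 : c d'.toProd.2 = b)
    (he1 : c e'.toProd.1 = a) (he2 : c e'.toProd.2 = b) : d' = e' := by
  have hT' := T'.isTree
  set r := geo hT' e'.toProd.1 d'.toProd.1 with hrdef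
  set s := geo hT' e'.toProd.2 d'.toProd.2 with hsdef
  have hr : ∀ z ∈ r.support, c z = a := by
    intro z hz
    have := hc.2.2.2.2 e'.toProd.1 d'.toProd.1 (he1.trans hd1.symm) r (geo_isPath hT' _ _) z hz
    rw [this, he1]
  have hs : ∀ z ∈ s.support, c z = b := by
    intro z hz
    have := hc.2.2.2.2 e'.toProd.2 d'.toProd.2 (he2.trans hd2.symm) s (geo_isPath hT' _ _) z hz
    rw [this, he2]
  have hba : a ≠ b := hab.ne
  have hW1 : (r.concat d'.adj).IsPath := by
    rw [SimpleGraph.Walk.isPath_def, SimpleGraph.Walk.support_concat,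
      List.nodup_append]
    refine ⟨(geo_isPath hT' _ _).support_nodup, List.nodup_singleton _, ?_⟩
    intro z hz y hy hzy
    rw [List.mem_singleton] at hy
    refine hba ?_
    rw [← hr z hz, hzy, hy, hd2]
  have hW2 : (SimpleGraph.Walk.cons e'.adj s).IsPath := by
    refine (geo_isPath hT' _ _).cons ?_
    intro hmem
    exact hba ((hs _ hmem).symm.trans he1).symm
  have hWeq : r.concat d'.adj = SimpleGraph.Walk.cons e'.adj s :=
    (geo_eq hT' hW1).trans (geo_eq hT' hW2).symm
  have hsupp := congrArg SimpleGraph.Walk.support hWeq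
  rw [SimpleGraph.Walk.support_concat, SimpleGraph.Walk.support_cons,
    r.support_eq_cons, List.cons_append] at hsupp
  simp only [List.cons.injEq, true_and] at hsupp
  have hlist : r.support.tail.concat d'.toProd.2 = s.support := by
    rw [List.concat_eq_append]; exact hsupp
  cases hL : r.support.tail with
  | nil =>
    rw [hL] at hlist
    simp only [List.concat_eq_append, List.nil_append] at hlist
    have hsnd : e'.toProd.2 = d'.toProd.2 := by
      rw [s.support_eq_cons] at hlist
      simp only [List.cons.injEq] at hlist
      exact hlist.1.symm
    have hfst : e'.toProd.1 = d'.toProd.1 := by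
      have hend : d'.toProd.1 ∈ r.support := SimpleGraph.Walk.end_mem_support r
      rw [r.support_eq_cons, hL] at hend
      rcases List.mem_cons.mp hend with h | h
      · exact h.symm
      · simp at h
    apply SimpleGraph.Dart.ext
    rw [Prod.ext_iff]
    exact ⟨hfst.symm, hsnd.symm⟩
  | cons z t =>
    exfalso
    rw [hL] at hlist
    have hz : c z = a := by
      apply hr
      rw [r.support_eq_cons, hL]
      exact List.mem_cons_of_mem _ (List.mem_cons_self)
    have hzs : z ∈ s.support := by
      rw [← hlist]
      simp
    exact hba (hz.symm.trans (hs z hzs))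

lemma lift_exists {c : T'.V → T.V} (hc : IsCollapseMap T' T c)
    (φ : T.graph.Dart → T'.graph.Dart)
    (hφ1 : ∀ d, c (φ d).toProd.1 = d.toProd.1) (hφ2 : ∀ d, c (φ d).toProd.2 = d.toProd.2)
    {u v : T.V} (p : T.graph.Walk u v) :
    p.IsPath → ∃ (x y : T'.V) (q : T'.graph.Walk x y), c x = u ∧ c y = v ∧ q.IsPath ∧
      (∀ z ∈ q.support, c z ∈ p.support) ∧ (∀ z ∈ q.support, c z = u → z = x) ∧
      List.Sublist (p.darts.map φ) q.darts := by
  have hT' := T'.isTree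
  induction p with
  | @nil u0 =>
    intro _
    obtain ⟨x, hx⟩ := hc.2.1 u0
    exact ⟨x, x, SimpleGraph.Walk.nil, hx, hx, SimpleGraph.Walk.IsPath.nil,
      by simp [hx], by simp, by simp⟩
  | @cons u w v h p' ih =>
    intro hp
    have hcons := (SimpleGraph.Walk.cons_isPath_iff h p').mp hp
    obtain ⟨x', y, q', hcx', hcy, hq', hsupp, hstart, hsub⟩ := ih hcons.1
    set D := φ ⟨(u, w), h⟩ with hDdef
    have hD1 : c D.toProd.1 = u := hφ1 _
    have hD2 : c D.toProd.2 = w := hφ2 _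
    set r := geo hT' D.toProd.2 x' with hrdef
    have hr : ∀ z ∈ r.support, c z = w := by
      intro z hz
      have := hc.2.2.2.2 D.toProd.2 x' (hD2.trans hcx'.symm) r (geo_isPath hT' _ _) z hz
      rw [this, hD2]
    have hq'nd := hq'.support_nodup
    rw [q'.support_eq_cons] at hq'nd
    obtain ⟨hx'tail, htailnd⟩ := List.nodup_cons.mp hq'nd
    have hdisj : ∀ z, z ∈ r.support → z ∈ q'.support.tail → False := by
      intro z hz1 hz2
      have hz3 : z ∈ q'.support := by
        rw [q'.support_eq_cons]
        exact List.mem_cons_of_mem _ hz2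
      have := hstart z hz3 (hr z hz1)
      subst this
      exact hx'tail hz2
    have hPapp : (r.append q').IsPath := by
      rw [SimpleGraph.Walk.isPath_def, SimpleGraph.Walk.support_append, List.nodup_append]
      exact ⟨(geo_isPath hT' _ _).support_nodup, htailnd, fun z hz1 _ hz2 hzw => by subst hzw; exact hdisj z hz1 hz2⟩
    have hWD : D.toProd.1 ∉ (r.append q').support := by
      rw [SimpleGraph.Walk.mem_support_append_iff]
      rintro (hmem | hmem)
      · exact h.ne (hD1.symm.trans (hr _ hmem))
      · exact hcons.2 (hD1 ▸ hsupp _ hmem)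
    have hW : (SimpleGraph.Walk.cons D.adj (r.append q')).IsPath := hPapp.cons hWD
    refine ⟨D.toProd.1, y, SimpleGraph.Walk.cons D.adj (r.append q'), hD1, hcy, hW, ?_, ?_, ?_⟩
    · intro z hz
      rw [SimpleGraph.Walk.support_cons] at hz
      rw [SimpleGraph.Walk.support_cons]
      rcases List.mem_cons.mp hz with rfl | hz
      · rw [hD1]; exact List.mem_cons_self
      · rw [SimpleGraph.Walk.mem_support_append_iff] at hz
        rcases hz with hz | hz
        · rw [hr z hz]
          exact List.mem_cons_of_mem _ (SimpleGraph.Walk.start_mem_support p')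
        · exact List.mem_cons_of_mem _ (hsupp z hz)
    · intro z hz hcz
      rw [SimpleGraph.Walk.support_cons] at hz
      rcases List.mem_cons.mp hz with rfl | hz
      · rfl
      · exfalso
        rw [SimpleGraph.Walk.mem_support_append_iff] at hz
        rcases hz with hz | hz
        · exact h.ne (hcz.symm.trans (hr z hz))
        · exact hcons.2 (hcz ▸ hsupp z hz)
    · simp only [SimpleGraph.Walk.darts_cons, SimpleGraph.Walk.darts_append, List.map_cons]
      have heta : (⟨(D.toProd.1, D.toProd.2), D.adj⟩ : T'.graph.Dart) = D :=
        SimpleGraph.Dart.ext _ _ rfl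
      rw [heta]
      exact List.Sublist.cons₂ _ (hsub.trans (List.sublist_append_right r.darts q'.darts))

lemma forward (h : CollapseOf T T') :
    ∃ φ : T.graph.Dart → T'.graph.Dart, Function.Injective φ ∧
      (∀ (g : G) (d : T.graph.Dart), φ (T.dartAct g d) = T'.dartAct g (φ d)) ∧
      (∀ d : T.graph.Dart, φ d.symm = (φ d).symm) ∧
      (∀ d₁ d₂ d₃ : T.graph.Dart, T.Aligned d₁ d₂ d₃ →
        T'.Aligned (φ d₁) (φ d₂) (φ d₃)) := by
  obtain ⟨c, hc⟩ := h
  have hexists : ∀ d : T.graph.Dart, ∃ d' : T'.graph.Dart,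
      c d'.toProd.1 = d.toProd.1 ∧ c d'.toProd.2 = d.toProd.2 := by
    intro d
    obtain ⟨u, v, huv, h1, h2⟩ := hc.2.2.2.1 _ _ d.adj
    exact ⟨⟨(u, v), huv⟩, h1, h2⟩
  set φ : T.graph.Dart → T'.graph.Dart := fun d => (hexists d).choose with hφdef
  have hφ1 : ∀ d, c (φ d).toProd.1 = d.toProd.1 := fun d => (hexists d).choose_spec.1
  have hφ2 : ∀ d, c (φ d).toProd.2 = d.toProd.2 := fun d => (hexists d).choose_spec.2
  refine ⟨φ, ?_, ?_, ?_, ?_⟩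
  · intro d₁ d₂ heq
    apply SimpleGraph.Dart.ext
    rw [Prod.ext_iff]
    constructor
    · rw [← hφ1 d₁, ← hφ1 d₂, heq]
    · rw [← hφ2 d₁, ← hφ2 d₂, heq]
  · intro g d
    refine lift_unique hc (T.dartAct g d).adj (hφ1 _) (hφ2 _) ?_ ?_
    · show c (T'.act g (φ d).toProd.1) = T.act g d.toProd.1
      rw [hc.1, hφ1]
    · show c (T'.act g (φ d).toProd.2) = T.act g d.toProd.2
      rw [hc.1, hφ2]
  · intro d
    refine lift_unique hc d.symm.adj (hφ1 _) (hφ2 _) ?_ ?_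
    · show c (φ d).toProd.2 = d.toProd.2
      exact hφ2 d
    · show c (φ d).toProd.1 = d.toProd.1
      exact hφ1 d
  · rintro d₁ d₂ d₃ ⟨u, v, p, hp, hsub⟩
    obtain ⟨x, y, q, _, _, hq, _, _, hsubq⟩ := lift_exists hc φ hφ1 hφ2 p hp
    refine ⟨x, y, q, hq, ?_⟩
    have hmap : [φ d₁, φ d₂, φ d₃] = [d₁, d₂, d₃].map φ := rfl
    rw [hmap]
    exact (hsub.map φ).trans hsubq

end Forward

section Backward

variable {G : Type u} [Group G] {T T' : GTree G}

lemma pair_transfer (φ : T.graph.Dart → T'.graph.Dart)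
    (halign : ∀ d₁ d₂ d₃ : T.graph.Dart, T.Aligned d₁ d₂ d₃ →
      T'.Aligned (φ d₁) (φ d₂) (φ d₃))
    {d₁ d₂ : T.graph.Dart}
    (h : ∃ (a b : T.V) (p : T.graph.Walk a b), p.IsPath ∧ List.Sublist [d₁, d₂] p.darts) :
    ∃ (a b : T'.V) (q : T'.graph.Walk a b), q.IsPath ∧
      List.Sublist [φ d₁, φ d₂] q.darts := by
  obtain ⟨a, b, p, hp, hsub⟩ := h
  have hE : ∃ x y : T.V, T.graph.Adj x y := ⟨_, _, d₁.adj⟩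
  obtain ⟨z, hz, hP⟩ := extend_path T p hp hE
  have hsub3 : List.Sublist [d₁, d₂, ⟨(b, z), hz⟩] (p.concat hz).darts := by
    rw [SimpleGraph.Walk.darts_concat, List.concat_eq_append]
    exact List.Sublist.append hsub (List.Sublist.refl [(⟨(b, z), hz⟩ : T.graph.Dart)])
  have hal : T.Aligned d₁ d₂ ⟨(b, z), hz⟩ := ⟨a, z, p.concat hz, hP, hsub3⟩
  obtain ⟨x, y, q, hq, hs⟩ := halign _ _ _ hal
  refine ⟨x, y, q, hq, List.Sublist.trans ?_ hs⟩
  exact List.sublist_append_left [φ d₁, φ d₂] [φ ⟨(b, z), hz⟩]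

lemma vertex_unique {v v' : T.V}
    (h : ∀ d : T.graph.Dart, side T.isTree d v ↔ side T.isTree d v') : v = v' := by
  by_contra hne
  obtain ⟨d₀, l, hf, hdarts⟩ := exists_cons_of_ne T.isTree (geo T.isTree v v') hne
  have hmem : d₀ ∈ (geo T.isTree v v').darts := by
    rw [hdarts]; exact List.mem_cons_self
  have hs : side T.isTree d₀ v' := side_end_of_mem_darts T.isTree (geo_isPath _ _ _) hmem
  have hns : ¬ side T.isTree d₀ v := by
    rw [← hf]; exact not_side_fst T.isTree d₀
  exact hns ((h d₀).mpr hs)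

lemma exists_c (φ : T.graph.Dart → T'.graph.Dart)
    (hsymm : ∀ d : T.graph.Dart, φ d.symm = (φ d).symm)
    (halign : ∀ d₁ d₂ d₃ : T.graph.Dart, T.Aligned d₁ d₂ d₃ →
      T'.Aligned (φ d₁) (φ d₂) (φ d₃))
    (x' : T'.V) :
    ∃ v : T.V, ∀ d : T.graph.Dart, side T'.isTree (φ d) x' ↔ side T.isTree d v := by
  by_cases hD : Nonempty T.graph.Dart
  swap
  · exact ⟨Classical.choice T.nonempty, fun d => absurd ⟨d⟩ hD⟩
  obtain ⟨e₀⟩ := hD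
  have hOsymm : ∀ d : T.graph.Dart, side T'.isTree (φ d) x' →
      ¬ side T'.isTree (φ d.symm) x' := by
    intro d hd
    rw [hsymm]
    exact not_side_symm_of_side _ hd
  have hOtot : ∀ d : T.graph.Dart, ¬ side T'.isTree (φ d) x' →
      side T'.isTree (φ d.symm) x' := by
    intro d hd
    rw [hsymm]
    exact side_symm_of_not_side _ hd
  have hcoher : ∀ d₁ d₂ : T.graph.Dart,
      (∃ (a b : T.V) (p : T.graph.Walk a b), p.IsPath ∧ List.Sublist [d₁, d₂] p.darts) →
      side T'.isTree (φ d₂) x' → side T'.isTree (φ d₁) x' := by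
    intro d₁ d₂ hpair h2
    obtain ⟨a, b, q, hq, hs⟩ := pair_transfer φ halign hpair
    exact side_of_pair_side T'.isTree hq hs h2
  have hsink : ∃ v : T.V, ∀ d : T.graph.Dart, d.toProd.1 = v →
      ¬ side T'.isTree (φ d) x' := by
    by_contra hns
    push_neg at hns
    have step : ∀ d : T.graph.Dart, side T'.isTree (φ d) x' →
        ∃ d' : T.graph.Dart, side T'.isTree (φ d') x' ∧
          (geo T'.isTree (φ d').toProd.2 x').length <
            (geo T'.isTree (φ d).toProd.2 x').length := by
      intro d hd
      obtain ⟨d', hd'1, hd'2⟩ := hns d.toProd.2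
      have hne : d' ≠ d.symm := by
        intro he
        exact hOsymm d hd (he ▸ hd'2)
      have hpair := pair_of_consec T.isTree hd'1.symm hne
      obtain ⟨a, b, q, hq, hs⟩ := pair_transfer φ halign hpair
      have hnp : ¬ side T'.isTree (φ d') ((φ d).toProd.2) :=
        (not_side_pair T'.isTree hq hs).2
      have hcross := cross T'.isTree hnp hd'2
      have hlen := congrArg SimpleGraph.Walk.length hcross
      rw [SimpleGraph.Walk.length_append, SimpleGraph.Walk.length_cons] at hlen
      exact ⟨d', hd'2, by omega⟩
    have descent : ∀ (n : ℕ) (d : T.graph.Dart), side T'.isTree (φ d) x' →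
        (geo T'.isTree (φ d).toProd.2 x').length ≤ n → False := by
      intro n
      induction n with
      | zero =>
        intro d hd hlen
        obtain ⟨d', _, hlt⟩ := step d hd
        omega
      | succ n ihn =>
        intro d hd hlen
        obtain ⟨d', hO', hlt⟩ := step d hd
        exact ihn d' hO' (by omega)
    by_cases h : side T'.isTree (φ e₀) x'
    · exact descent _ e₀ h le_rfl
    · exact descent _ e₀.symm (hOtot e₀ h) le_rfl
  obtain ⟨v, hv⟩ := hsink
  refine ⟨v, ?_⟩
  have dir1 : ∀ d : T.graph.Dart, ¬ side T.isTree d v → ¬ side T'.isTree (φ d) x' := by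
    intro d hnd hOd
    by_cases hfv : d.toProd.1 = v
    · exact hv d hfv hOd
    · have hcross := cross T.isTree hnd (side_snd T.isTree d)
      obtain ⟨d₀, l, hd₀f, hdarts⟩ :=
        exists_cons_of_ne T.isTree (geo T.isTree v d.toProd.1) (fun he => hfv he.symm)
      have hgeodarts := congrArg SimpleGraph.Walk.darts hcross
      rw [geo_self, SimpleGraph.Walk.darts_append, SimpleGraph.Walk.darts_cons,
        SimpleGraph.Walk.darts_nil, hdarts] at hgeodarts
      have heta : (⟨(d.toProd.1, d.toProd.2), d.adj⟩ : T.graph.Dart) = d :=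
        SimpleGraph.Dart.ext _ _ rfl
      rw [heta] at hgeodarts
      have hsubpair : List.Sublist [d₀, d] (geo T.isTree v d.toProd.2).darts := by
        rw [hgeodarts]
        exact List.Sublist.cons₂ _ (List.singleton_sublist.mpr (by simp))
      have hOd₀ : side T'.isTree (φ d₀) x' :=
        hcoher d₀ d ⟨v, d.toProd.2, geo T.isTree v d.toProd.2,
          geo_isPath T.isTree _ _, hsubpair⟩ hOd
      exact hv d₀ hd₀f hOd₀
  intro d
  constructor
  · intro hOd
    by_contra hnd
    exact dir1 d hnd hOd
  · intro hsd
    by_contra hnOd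
    exact dir1 d.symm (not_side_symm_of_side _ hsd) (hOtot d hnOd)

end Backward

section BackwardMain

variable {G : Type u} [Group G] {T T' : GTree G}

lemma backward (φ : T.graph.Dart → T'.graph.Dart)
    (hequi : ∀ (g : G) (d : T.graph.Dart), φ (T.dartAct g d) = T'.dartAct g (φ d))
    (hsymm : ∀ d : T.graph.Dart, φ d.symm = (φ d).symm)
    (halign : ∀ d₁ d₂ d₃ : T.graph.Dart, T.Aligned d₁ d₂ d₃ →
      T'.Aligned (φ d₁) (φ d₂) (φ d₃)) :
    CollapseOf T T' := by
  classical
  have hex := exists_c φ hsymm halign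
  choose c hc using hex
  -- uniqueness principle
  have huniq : ∀ (x' : T'.V) (v : T.V),
      (∀ d : T.graph.Dart, side T'.isTree (φ d) x' ↔ side T.isTree d v) → c x' = v := by
    intro x' v hv
    apply vertex_unique
    intro d
    exact ((hc x' d).symm.trans (hv d))
  -- (1) equivariance
  have hequiv_c : ∀ (g : G) (x' : T'.V), c (T'.act g x') = T.act g (c x') := by
    intro g x'
    apply huniq
    intro d
    have e1 : φ d = T'.dartAct g (φ (T.dartAct g⁻¹ d)) := by
      rw [← hequi, dartAct_dartAct_inv]
    have h1 := side_dartAct T' g (φ (T.dartAct g⁻¹ d)) x'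
    have h2 := hc x' (T.dartAct g⁻¹ d)
    have h3 := side_dartAct T g (T.dartAct g⁻¹ d) (c x')
    rw [dartAct_dartAct_inv] at h3
    rw [e1]
    exact (h1.trans h2).trans h3.symm
  -- (3) adjacency
  have hadj_c : ∀ x' y' : T'.V, T'.graph.Adj x' y' → c x' ≠ c y' →
      T.graph.Adj (c x') (c y') := by
    intro x' y' hxy hne
    obtain ⟨d₀, l, hf, hdarts⟩ :=
      exists_cons_of_ne T.isTree (geo T.isTree (c x') (c y')) hne
    have hmem : d₀ ∈ (geo T.isTree (c x') (c y')).darts := by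
      rw [hdarts]; exact List.mem_cons_self
    have hsv : side T.isTree d₀ (c y') :=
      side_end_of_mem_darts T.isTree (geo_isPath _ _ _) hmem
    have hnsu : ¬ side T.isTree d₀ (c x') := by
      rw [← hf]; exact not_side_fst T.isTree d₀
    have hA : ¬ side T'.isTree (φ d₀) x' := fun hs => hnsu ((hc x' d₀).mp hs)
    have hB : side T'.isTree (φ d₀) y' := (hc y' d₀).mpr hsv
    have hcross := cross T'.isTree hA hB
    have hlen := congrArg SimpleGraph.Walk.length hcross
    rw [geo_of_adj T'.isTree hxy, SimpleGraph.Walk.length_append,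
      SimpleGraph.Walk.length_cons, SimpleGraph.Walk.length_cons,
      SimpleGraph.Walk.length_nil] at hlen
    have hfst : x' = (φ d₀).toProd.1 :=
      SimpleGraph.Walk.eq_of_length_eq_zero
        (p := geo T'.isTree x' ((φ d₀).toProd.1)) (by omega)
    have hsnd : (φ d₀).toProd.2 = y' :=
      SimpleGraph.Walk.eq_of_length_eq_zero
        (p := geo T'.isTree ((φ d₀).toProd.2) y') (by omega)
    by_cases hlast : d₀.toProd.2 = c y'
    · rw [← hf, ← hlast]
      exact d₀.adj
    · exfalso
      obtain ⟨d₁, l', hf1, hdarts1⟩ :=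
        exists_cons_of_ne T.isTree (geo T.isTree d₀.toProd.2 (c y')) hlast
      have hmem1 : d₁ ∈ (geo T.isTree d₀.toProd.2 (c y')).darts := by
        rw [hdarts1]; exact List.mem_cons_self
      have hs1 : side T.isTree d₁ (c y') :=
        side_end_of_mem_darts T.isTree (geo_isPath _ _ _) hmem1
      have hne1 : d₁ ≠ d₀.symm := by
        intro he
        rw [he] at hs1
        exact not_side_symm_of_side T.isTree hsv hs1
      have hpair := pair_of_consec T.isTree hf1.symm hne1
      obtain ⟨a, b, q, hq, hs⟩ := pair_transfer φ halign hpair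
      have hnp : ¬ side T'.isTree (φ d₁) ((φ d₀).toProd.2) :=
        (not_side_pair T'.isTree hq hs).2
      rw [hsnd] at hnp
      exact hnp ((hc y' d₁).mpr hs1)
  -- key lemma for φ-endpoints
  have hK : ∀ e d : T.graph.Dart, ¬ side T.isTree d e.toProd.1 →
      ¬ side T'.isTree (φ d) ((φ e).toProd.1) := by
    intro e d hnd
    by_cases hde : d = e
    · subst hde
      exact not_side_fst T'.isTree (φ d)
    by_cases hdesymm : d = e.symm
    · subst hdesymm
      exact absurd (side_snd T.isTree e.symm) hnd
    have hnd2 : ¬ side T.isTree d e.toProd.2 := by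
      intro hsd2
      have hcross := cross T.isTree hnd hsd2
      have hlen := congrArg SimpleGraph.Walk.length hcross
      rw [geo_of_adj T.isTree e.adj, SimpleGraph.Walk.length_append,
        SimpleGraph.Walk.length_cons, SimpleGraph.Walk.length_cons,
        SimpleGraph.Walk.length_nil] at hlen
      have hfst : e.toProd.1 = d.toProd.1 :=
        SimpleGraph.Walk.eq_of_length_eq_zero
          (p := geo T.isTree (e.toProd.1) (d.toProd.1)) (by omega)
      have hsnd : d.toProd.2 = e.toProd.2 :=
        SimpleGraph.Walk.eq_of_length_eq_zero
          (p := geo T.isTree (d.toProd.2) (e.toProd.2)) (by omega)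
      apply hde
      apply SimpleGraph.Dart.ext
      rw [Prod.ext_iff]
      exact ⟨hfst.symm, hsnd⟩
    by_cases hse : side T.isTree e d.toProd.2
    · have hpair := pair_of_side T.isTree (fun he => hde he.symm) hse hnd
      obtain ⟨a, b, q, hq, hs⟩ := pair_transfer φ halign hpair
      exact (not_side_pair T'.isTree hq hs).1
    · have hse2 : side T.isTree e.symm d.toProd.2 := side_symm_of_not_side _ hse
      have hpair := pair_of_side T.isTree (e := e.symm) (d := d)
        (fun he => hdesymm he.symm) hse2 hnd2
      obtain ⟨a, b, q, hq, hs⟩ := pair_transfer φ halign hpair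
      have h2 := (not_side_pair T'.isTree hq hs).2
      rw [hsymm] at h2
      exact h2
  have hcfst : ∀ e : T.graph.Dart, c ((φ e).toProd.1) = e.toProd.1 := by
    intro e
    apply huniq
    intro d
    constructor
    · intro hs
      by_contra hns
      exact hK e d hns hs
    · intro hs
      by_contra hns
      have h2 : side T'.isTree ((φ d).symm) ((φ e).toProd.1) :=
        side_symm_of_not_side _ hns
      rw [← hsymm] at h2
      exact hK e d.symm (not_side_symm_of_side _ hs) h2
  have hcsnd : ∀ e : T.graph.Dart, c ((φ e).toProd.2) = e.toProd.2 := by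
    intro e
    have h := hcfst e.symm
    rw [hsymm] at h
    exact h
  have hedges_c : ∀ u v : T.V, T.graph.Adj u v →
      ∃ x y : T'.V, T'.graph.Adj x y ∧ c x = u ∧ c y = v := by
    intro u v huv
    exact ⟨(φ ⟨(u, v), huv⟩).toProd.1, (φ ⟨(u, v), huv⟩).toProd.2, (φ _).adj,
      hcfst ⟨(u, v), huv⟩, hcsnd ⟨(u, v), huv⟩⟩
  -- (5) subtree property
  have hsub_c : ∀ x' y' : T'.V, c x' = c y' → ∀ p : T'.graph.Walk x' y', p.IsPath →
      ∀ w ∈ p.support, c w = c x' := by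
    intro x' y' hcxy p hp w hw
    by_contra hne
    obtain ⟨d₀, l, hf, hdarts⟩ :=
      exists_cons_of_ne T.isTree (geo T.isTree (c x') (c w)) (fun he => hne he.symm)
    have hmem : d₀ ∈ (geo T.isTree (c x') (c w)).darts := by
      rw [hdarts]; exact List.mem_cons_self
    have hsw : side T.isTree d₀ (c w) :=
      side_end_of_mem_darts T.isTree (geo_isPath _ _ _) hmem
    have hnsx : ¬ side T.isTree d₀ (c x') := by
      rw [← hf]; exact not_side_fst T.isTree d₀
    have hA : ¬ side T'.isTree (φ d₀) x' := fun hs => hnsx ((hc x' d₀).mp hs)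
    have hA' : ¬ side T'.isTree (φ d₀) y' := by
      intro hs
      have h3 := (hc y' d₀).mp hs
      rw [← hcxy] at h3
      exact hnsx h3
    have hB : side T'.isTree (φ d₀) w := (hc w d₀).mpr hsw
    have m1 := (cross_mem T'.isTree hA hB).1
    have m2 := (cross_mem T'.isTree hA' hB).1
    have htake : p.takeUntil w hw = geo T'.isTree x' w := geo_eq T'.isTree (hp.takeUntil hw)
    have hdrop : p.dropUntil w hw = geo T'.isTree w y' := geo_eq T'.isTree (hp.dropUntil hw)
    have hnd := hp.support_nodup
    rw [← p.take_spec hw, SimpleGraph.Walk.support_append, List.nodup_append] at hnd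
    have hm1 : (φ d₀).toProd.1 ∈ (p.takeUntil w hw).support := by
      rw [htake]; exact m1
    have hm2 : (φ d₀).toProd.1 ∈ (p.dropUntil w hw).support.tail := by
      rw [hdrop]
      have m2' : (φ d₀).toProd.1 ∈ (geo T'.isTree w y').support := by
        rw [geo_reverse T'.isTree y' w, SimpleGraph.Walk.support_reverse]
        exact List.mem_reverse.mpr m2
      rw [(geo T'.isTree w y').support_eq_cons] at m2'
      rcases List.mem_cons.mp m2' with heq | htl
      · exfalso
        rw [← heq] at hB
        exact not_side_fst T'.isTree (φ d₀) hB
      · exact htl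
    exact hnd.2.2 _ hm1 _ hm2 rfl
  -- (2) surjectivity
  have hwalk : ∀ (a b : T'.V) (W : T'.graph.Walk a b),
      ∃ Q : T.graph.Walk (c a) (c b), ∀ z ∈ Q.support, z ∈ Set.range c := by
    intro a b W
    induction W with
    | @nil a0 =>
      refine ⟨SimpleGraph.Walk.nil, ?_⟩
      intro z hz
      rw [SimpleGraph.Walk.support_nil, List.mem_singleton] at hz
      exact ⟨a0, hz.symm⟩
    | @cons a m b hadj W' ih =>
      obtain ⟨Q', hQ'⟩ := ih
      by_cases hcm : c a = c m
      · refine ⟨Q'.copy hcm.symm rfl, ?_⟩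
        intro z hz
        rw [SimpleGraph.Walk.support_copy] at hz
        exact hQ' z hz
      · refine ⟨SimpleGraph.Walk.cons (hadj_c a m hadj hcm) Q', ?_⟩
        intro z hz
        rw [SimpleGraph.Walk.support_cons] at hz
        rcases List.mem_cons.mp hz with rfl | hz
        · exact ⟨a, rfl⟩
        · exact hQ' z hz
  have hrange := T.minimal (Set.range c)
    ⟨c (Classical.choice T'.nonempty), Set.mem_range_self _⟩
    (by
      rintro g v ⟨x', rfl⟩
      exact ⟨T'.act g x', hequiv_c g x'⟩)
    (by
      rintro u ⟨x', rfl⟩ v hv p hp w hw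
      obtain ⟨y', rfl⟩ := hv
      obtain ⟨W⟩ := T'.isTree.isConnected.preconnected x' y'
      obtain ⟨Q, hQ⟩ := hwalk x' y' W
      have hbp : Q.bypass.IsPath := Q.bypass_isPath
      have hpq : p = Q.bypass := (geo_eq T.isTree hp).trans (geo_eq T.isTree hbp).symm
      exact hQ w (Q.support_bypass_subset (hpq ▸ hw)))
  have hsurj : Function.Surjective c := by
    intro v
    have hv : v ∈ Set.range c := by rw [hrange]; trivial
    exact hv
  exact ⟨c, hequiv_c, hsurj, hadj_c, hedges_c, hsub_c⟩

end BackwardMain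

end Lemma57

/-- **Lemma (Guirardel–Levitt, Lemma 5.7).** Let `T, T'` be simplicial `G`-trees.  Then
`T` is a (possibly non-elementary) collapse of `T'` if and only if there is an
equivariant injection `φ : E(T) ↪ E(T')` of oriented edge sets, commuting with edge
reversal and preserving alignment. -/
theorem statement_9 {G : Type u} [Group G] [Group.FG G] (T T' : GTree G) :
    CollapseOf T T' ↔
      ∃ φ : T.graph.Dart → T'.graph.Dart, Function.Injective φ ∧
        (∀ (g : G) (d : T.graph.Dart), φ (T.dartAct g d) = T'.dartAct g (φ d)) ∧
        (∀ d : T.graph.Dart, φ d.symm = (φ d).symm) ∧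
        (∀ d₁ d₂ d₃ : T.graph.Dart, T.Aligned d₁ d₂ d₃ →
          T'.Aligned (φ d₁) (φ d₂) (φ d₃)) := by
  constructor
  · exact fun h => Lemma57.forward h
  · rintro ⟨φ, _, hequi, hsymm, halign⟩
    exact Lemma57.backward φ hequi hsymm halign
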